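/- Order preservation of Tonks' vertex map: the map φ : S_n → Y_n is order-preserving from the (right) weak Bruhat order on S_n to the Tamari order on Y_n; that is, if π ≤_B ρ then φ(π) ≤_T φ(ρ). -/

import Mathlib

/-- Indexed terms of the language `L^I`: generators `2^k` and partial compositions. -/
inductive Trm : Type
  | gen : ℕ → Trm
  | comp : Trm → ℕ → Trm → Trm
deriving DecidableEq

namespace Trm

/-- Arity `|A|`. -/
def arity : Trm → ℕ
  | gen _ => 2
  | comp A _ B => A.arity + B.arity - 1

/-- Set of indices occurring in a term. -/
def ind : Trm → Finset ℕ
  | gen k => {k}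
  | comp A _ B => A.ind ∪ B.ind

/-- Root index. -/
def root : Trm → ℕ
  | gen k => k
  | comp A _ _ => A.root

/-- Number of occurrences of the generator. -/
def countGen : Trm → ℕ
  | gen _ => 1
  | comp A _ B => A.countGen + B.countGen

end Trm

/-- The congruence `=_I` generated by (assoc1) and (assoc2). -/
inductive IEq : Trm → Trm → Prop
  | refl (A : Trm) : IEq A A
  | symm {A B} : IEq A B → IEq B A
  | trans {A B C} : IEq A B → IEq B C → IEq A C
  | congr {A A' B B'} (n : ℕ) : IEq A A' → IEq B B' →
      IEq (Trm.comp A n B) (Trm.comp A' n B')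
  | assoc1 (A B C : Trm) (n m : ℕ) : n ≤ m → m < n + B.arity →
      IEq (Trm.comp (Trm.comp A n B) m C) (Trm.comp A n (Trm.comp B (m - n + 1) C))
  | assoc2 (A B C : Trm) (n m : ℕ) : n + B.arity ≤ m →
      IEq (Trm.comp (Trm.comp A n B) m C) (Trm.comp (Trm.comp A (m - B.arity + 1) C) n B)

/-- Planar binary trees. -/
inductive BT : Type
  | leaf : BT
  | node : BT → BT → BT
deriving DecidableEq

namespace BT

/-- Number of leaves. -/
def leaves : BT → ℕ
  | leaf => 1
  | node l r => l.leaves + r.leaves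

/-- Graft `S` at the `i`-th leaf (1-indexed) of a tree. -/
def graft : BT → ℕ → BT → BT
  | leaf, _, S => S
  | node l r, i, S =>
    if i ≤ l.leaves then node (l.graft i S) r else node l (r.graft (i - l.leaves) S)

end BT

/-- Evaluation `ε` of indexed terms to planar binary trees. -/
def Trm.eval : Trm → BT
  | Trm.gen _ => BT.node BT.leaf BT.leaf
  | Trm.comp A i B => A.eval.graft i B.eval

/-- `l`-factors. -/
inductive LFactor : Trm → Prop
  | gen (k : ℕ) : LFactor (Trm.gen k)
  | step {A : Trm} (j : ℕ) : LFactor A → j ∉ A.ind →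
      LFactor (Trm.comp A ((A.ind.filter (· < j)).card + 1) (Trm.gen j))

/-- Auxiliary for the head-insertion encoding: `done` is the list of already
inserted letters. -/
def hAux : Trm → List ℕ → List ℕ → Trm
  | A, _, [] => A
  | A, done, y :: rest =>
      hAux (Trm.comp A ((done.filter (· < y)).length + 1) (Trm.gen y)) (done ++ [y]) rest

/-- Head-insertion encoding `h` (junk value on the empty word). -/
def hWord : List ℕ → Trm
  | [] => Trm.gen 0
  | x :: rest => hAux (Trm.gen x) [x] rest

/-- `u_a(x)`: number of letters to the left of `x` in `a` that are greater than `x`. -/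
def uCount (a : List ℕ) (x : ℕ) : ℕ := ((a.takeWhile (· ≠ x)).filter (x < ·)).length

/-- Decreasing rearrangement of a word. -/
def sortDesc (a : List ℕ) : List ℕ := (a.mergeSort (· ≤ ·)).reverse

/-- Decreasing encoding `f` (junk value on the empty word). -/
def fWord (a : List ℕ) : Trm :=
  match sortDesc a with
  | [] => Trm.gen 0
  | k :: rest => rest.foldl (fun A x => Trm.comp A (uCount a x + 1) (Trm.gen x)) (Trm.gen k)

/-- Standardization of a word of distinct integers. -/
def std (a : List ℕ) : List ℕ := a.map (fun x => (a.filter (· ≤ x)).length)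

/-- Tonks' vertex map, splitting form `φ`. -/
def tonksPhi (a : List ℕ) : BT :=
  match ha : a.getLast? with
  | none => BT.leaf
  | some x =>
      BT.node (tonksPhi (std (a.filter (· < x)))) (tonksPhi (std (a.filter (x < ·))))
termination_by a.length
decreasing_by
  · have hx : x ∈ a := List.mem_of_mem_getLast? (Option.mem_def.mpr ha)
    simp only [std, List.length_map, List.length_unattach]
    exact lt_of_lt_of_eq (List.length_filter_lt_length_iff_exists.2
      ⟨⟨x, hx⟩, List.mem_attach _ _, by simp⟩) List.length_attach
  · have hx : x ∈ a := List.mem_of_mem_getLast? (Option.mem_def.mpr ha)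
    simp only [std, List.length_map, List.length_unattach]
    exact lt_of_lt_of_eq (List.length_filter_lt_length_iff_exists.2
      ⟨⟨x, hx⟩, List.mem_attach _ _, by simp⟩) List.length_attach

/-- Tonks' vertex map, head-grafting form `φ̂`. -/
def phiHat : List ℕ → BT
  | [] => BT.leaf
  | x :: rest => (phiHat (std rest)).graft x (BT.node BT.leaf BT.leaf)
termination_by a => a.length
decreasing_by
  simp [std]

/-- The Loday–Ronco map `ψ`. -/
def lodayPsi (a : List ℕ) : BT :=
  match hm : a.maximum with
  | none => BT.leaf
  | some m =>
      let i := a.idxOf m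
      BT.node (lodayPsi (std (a.take i))) (lodayPsi (std (a.drop (i + 1))))
termination_by a.length
decreasing_by
  · have hmem : m ∈ a := List.maximum_mem hm
    have hi : a.idxOf m < a.length := List.idxOf_lt_length_iff.2 hmem
    simp only [std, List.length_map, List.length_take]
    omega
  · have : a ≠ [] := by rintro rfl; simp [List.maximum] at hm
    have : 0 < a.length := List.length_pos_iff.2 this
    simp only [std, List.length_map, List.length_drop]
    omega

/-- Inverse of a permutation word on `{1,…,n}`. -/
def invWord (π : List ℕ) : List ℕ :=
  (List.range π.length).map (fun j => π.idxOf (j + 1) + 1)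

/-- One Tamari (right rotation) step, at any subtree. -/
inductive TamariStep : BT → BT → Prop
  | rot (X Y Z : BT) : TamariStep (BT.node (BT.node X Y) Z) (BT.node X (BT.node Y Z))
  | left {l l'} (r : BT) : TamariStep l l' → TamariStep (BT.node l r) (BT.node l' r)
  | right (l : BT) {r r'} : TamariStep r r' → TamariStep (BT.node l r) (BT.node l r')

/-- The Tamari order. -/
def TamariLE : BT → BT → Prop := Relation.ReflTransGen TamariStep

/-- The strict Tamari order. -/
def TamariLT : BT → BT → Prop := Relation.TransGen TamariStep

/-- One cover of the right weak Bruhat order on words. -/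
inductive BruhatStep : List ℕ → List ℕ → Prop
  | swap (α : List ℕ) {u v : ℕ} (β : List ℕ) : u < v →
      BruhatStep (α ++ u :: v :: β) (α ++ v :: u :: β)

/-- The right weak Bruhat order on words. -/
def BruhatLE : List ℕ → List ℕ → Prop := Relation.ReflTransGen BruhatStep

/-- Head-insertion index `k(a; σ)`. -/
def kIdx (a : ℕ) (σ : List ℕ) : ℕ := 1 + (σ.filter (· < a)).length

section TonksAux

/-- standardization value -/
def stdVal (a : List ℕ) (x : ℕ) : ℕ := (a.filter (· ≤ x)).length

lemma std_eq_map (a : List ℕ) : std a = a.map (stdVal a) := rfl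

lemma stdVal_strictMono {a : List ℕ} {x y : ℕ} (hy : y ∈ a) (hxy : x < y) :
    stdVal a x < stdVal a y := by
  have hsub : (a.filter (· ≤ x)).Sublist (a.filter (· ≤ y)) := by
    apply List.monotone_filter_right
    intro z hz
    simp only [decide_eq_true_eq] at *
    omega
  have hle := hsub.length_le
  rcases lt_or_eq_of_le hle with h | h
  · exact h
  · exfalso
    have heq := hsub.eq_of_length h
    have hy1 : y ∈ a.filter (· ≤ y) := by simp [hy]
    rw [← heq] at hy1
    simp only [List.mem_filter, decide_eq_true_eq] at hy1
    omega

lemma stdVal_lt_iff {a : List ℕ} {x y : ℕ} (hx : x ∈ a) (hy : y ∈ a) :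
    stdVal a x < stdVal a y ↔ x < y := by
  constructor
  · intro h
    rcases lt_trichotomy x y with h1 | rfl | h1
    · exact h1
    · omega
    · exact absurd (stdVal_strictMono hx h1) (by omega)
  · exact stdVal_strictMono hy

lemma std_map {g : ℕ → ℕ} {v : List ℕ}
    (hg : ∀ x ∈ v, ∀ y ∈ v, x < y → g x < g y) :
    std (v.map g) = std v := by
  have key : ∀ x ∈ v, ∀ y ∈ v, (g x ≤ g y ↔ x ≤ y) := by
    intro x hx y hy
    constructor
    · intro h
      by_contra hc
      push_neg at hc
      have := hg y hy x hx hc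
      omega
    · intro h
      rcases eq_or_lt_of_le h with rfl | h'
      · exact le_rfl
      · exact (hg x hx y hy h').le
  rw [std_eq_map, std_eq_map, List.map_map]
  apply List.map_congr_left
  intro x hx
  simp only [Function.comp_apply]
  unfold stdVal
  rw [List.filter_map, List.length_map]
  congr 1
  apply List.filter_congr
  intro z hz
  simp only [Function.comp_apply]
  exact decide_eq_decide.mpr (key z hz x hx)

lemma std_filter_lt {a : List ℕ} {x : ℕ} (hx : x ∈ a) :
    (std a).filter (· < stdVal a x) = (a.filter (· < x)).map (stdVal a) := by
  rw [std_eq_map, List.filter_map]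
  congr 1
  apply List.filter_congr
  intro z hz
  simp only [Function.comp_apply]
  exact decide_eq_decide.mpr (stdVal_lt_iff hz hx)

lemma std_filter_gt {a : List ℕ} {x : ℕ} (hx : x ∈ a) :
    (std a).filter (stdVal a x < ·) = (a.filter (x < ·)).map (stdVal a) := by
  rw [std_eq_map, List.filter_map]
  congr 1
  apply List.filter_congr
  intro z hz
  simp only [Function.comp_apply]
  exact decide_eq_decide.mpr (stdVal_lt_iff hx hz)

theorem tonksPhi_nil : tonksPhi [] = BT.leaf := by
  rw [tonksPhi]; rfl

theorem tonksPhi_concat (w : List ℕ) (x : ℕ) :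
    tonksPhi (w ++ [x]) =
      BT.node (tonksPhi (std ((w ++ [x]).filter (· < x))))
        (tonksPhi (std ((w ++ [x]).filter (x < ·)))) := by
  rw [tonksPhi]
  split
  · next ha => simp [List.getLast?_concat] at ha
  · next y ha =>
      rw [List.getLast?_concat] at ha
      cases ha
      rfl

lemma tonksPhi_std (a : List ℕ) : tonksPhi (std a) = tonksPhi a := by
  rcases a.eq_nil_or_concat with rfl | ⟨w, x, rfl⟩
  · rfl
  · rw [List.concat_eq_append]
    have hx : x ∈ w ++ [x] := by simp
    have h1 : std (w ++ [x]) =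
        (List.map (stdVal (w ++ [x])) w) ++ [stdVal (w ++ [x]) x] := by
      rw [std_eq_map, List.map_append]
      rfl
    have hmono : ∀ (p : ℕ → Bool), ∀ x' ∈ (w ++ [x]).filter p, ∀ y' ∈ (w ++ [x]).filter p,
        x' < y' → stdVal (w ++ [x]) x' < stdVal (w ++ [x]) y' := by
      intro p x' _ y' hy' hlt
      exact stdVal_strictMono (List.mem_of_mem_filter hy') hlt
    rw [h1, tonksPhi_concat, ← h1, std_filter_lt hx, std_filter_gt hx,
        std_map (hmono _), std_map (hmono _), tonksPhi_concat]

lemma tonksPhi_concat' (w : List ℕ) (x : ℕ) :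
    tonksPhi (w ++ [x]) =
      BT.node (tonksPhi (w.filter (· < x))) (tonksPhi (w.filter (x < ·))) := by
  have e1 : (w ++ [x]).filter (· < x) = w.filter (· < x) := by simp
  have e2 : (w ++ [x]).filter (x < ·) = w.filter (x < ·) := by simp
  rw [tonksPhi_concat, e1, e2, tonksPhi_std, tonksPhi_std]

lemma TamariLE_node_left {l l' : BT} (r : BT) (h : TamariLE l l') :
    TamariLE (BT.node l r) (BT.node l' r) :=
  Relation.ReflTransGen.lift (fun t => BT.node t r) (fun _ _ h => TamariStep.left r h) _ _ h

lemma TamariLE_node_right (l : BT) {r r' : BT} (h : TamariLE r r') :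
    TamariLE (BT.node l r) (BT.node l r') :=
  Relation.ReflTransGen.lift (fun t => BT.node l t) (fun _ _ h => TamariStep.right l h) _ _ h

lemma tonksPhi_step : ∀ (N : ℕ) (a a' : List ℕ), a.length ≤ N →
    BruhatStep a a' → TamariLE (tonksPhi a) (tonksPhi a') := by
  intro N
  induction N with
  | zero =>
      rintro a a' hlen (@⟨γ, u, v, β, huv⟩)
      simp at hlen
  | succ N ih =>
      rintro a a' hlen (@⟨γ, u, v, β, huv⟩)
      rcases β.eq_nil_or_concat with rfl | ⟨δ, x, rfl⟩
      · -- swap at the last two positions: one right rotation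
        have e1 : γ ++ [u, v] = (γ ++ [u]) ++ [v] := by simp
        have e2 : γ ++ [v, u] = (γ ++ [v]) ++ [u] := by simp
        have fu : (γ ++ [u]).filter (· < v) = γ.filter (· < v) ++ [u] := by
          simp [huv]
        have fu2 : (γ ++ [u]).filter (v < ·) = γ.filter (v < ·) := by
          simp [huv, Nat.not_lt.mpr huv.le]
        have fv : (γ ++ [v]).filter (· < u) = γ.filter (· < u) := by
          simp [Nat.not_lt.mpr huv.le]
        have fv2 : (γ ++ [v]).filter (u < ·) = γ.filter (u < ·) ++ [v] := by
          simp [huv]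
        have ef1 : (γ.filter (· < v)).filter (· < u) = γ.filter (· < u) := by
          rw [List.filter_filter]
          apply List.filter_congr
          intro z _
          by_cases h : z < u
          · simp [h, lt_trans h huv]
          · simp [h]
        have ef2 : (γ.filter (u < ·)).filter (· < v) = (γ.filter (· < v)).filter (u < ·) := by
          rw [List.filter_filter, List.filter_filter]
          apply List.filter_congr
          intro z _
          exact Bool.and_comm _ _
        have ef3 : (γ.filter (u < ·)).filter (v < ·) = γ.filter (v < ·) := by
          rw [List.filter_filter]
          apply List.filter_congr
          intro z _
          by_cases h : v < z
          · simp [h, lt_trans huv h]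
          · simp [h]
        rw [e1, e2, tonksPhi_concat', tonksPhi_concat', fu, fu2, fv, fv2,
            tonksPhi_concat', tonksPhi_concat', ef1, ef2, ef3]
        exact Relation.ReflTransGen.single (TamariStep.rot _ _ _)
      · -- swap strictly before the last position
        rw [List.concat_eq_append] at *
        have e1 : γ ++ u :: v :: (δ ++ [x]) = (γ ++ u :: v :: δ) ++ [x] := by simp
        have e2 : γ ++ v :: u :: (δ ++ [x]) = (γ ++ v :: u :: δ) ++ [x] := by simp
        have hlen' : ∀ p : ℕ → Bool, ((γ ++ u :: v :: δ).filter p).length ≤ N := by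
          intro p
          have h1 := List.length_filter_le p (γ ++ u :: v :: δ)
          rw [e1] at hlen
          simp only [List.length_append, List.length_cons] at hlen h1 ⊢
          omega
        rw [e1, e2, tonksPhi_concat', tonksPhi_concat']
        rcases Nat.lt_trichotomy x u with h1 | rfl | h1
        · -- x < u < v : right children step, left equal
          have h2 : x < v := lt_trans h1 huv
          have hL : (γ ++ u :: v :: δ).filter (· < x) = (γ ++ v :: u :: δ).filter (· < x) := by
            simp [Nat.not_lt.mpr h1.le, Nat.not_lt.mpr h2.le]
          have hR : BruhatStep ((γ ++ u :: v :: δ).filter (x < ·))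
              ((γ ++ v :: u :: δ).filter (x < ·)) := by
            have r1 : (γ ++ u :: v :: δ).filter (x < ·)
                = γ.filter (x < ·) ++ u :: v :: δ.filter (x < ·) := by simp [h1, h2]
            have r2 : (γ ++ v :: u :: δ).filter (x < ·)
                = γ.filter (x < ·) ++ v :: u :: δ.filter (x < ·) := by simp [h1, h2]
            rw [r1, r2]
            exact BruhatStep.swap _ _ huv
          rw [hL]
          exact TamariLE_node_right _ (ih _ _ (hlen' _) hR)
        · -- x = u : both children equal
          have hvx : ¬ v < x := by omega
          have hL : (γ ++ x :: v :: δ).filter (· < x) = (γ ++ v :: x :: δ).filter (· < x) := by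
            simp [hvx]
          have hR : (γ ++ x :: v :: δ).filter (x < ·) = (γ ++ v :: x :: δ).filter (x < ·) := by
            simp [huv]
          rw [hL, hR]
          exact Relation.ReflTransGen.refl
        · rcases Nat.lt_trichotomy x v with h2 | rfl | h2
          · -- u < x < v : both children equal
            have hL : (γ ++ u :: v :: δ).filter (· < x) = (γ ++ v :: u :: δ).filter (· < x) := by
              simp [h1, Nat.not_lt.mpr h2.le]
            have hR : (γ ++ u :: v :: δ).filter (x < ·) = (γ ++ v :: u :: δ).filter (x < ·) := by
              simp [h2, Nat.not_lt.mpr h1.le]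
            rw [hL, hR]
            exact Relation.ReflTransGen.refl
          · -- x = v : both children equal
            have hxu : ¬ x < u := by omega
            have hL : (γ ++ u :: x :: δ).filter (· < x) = (γ ++ x :: u :: δ).filter (· < x) := by
              simp [huv]
            have hR : (γ ++ u :: x :: δ).filter (x < ·) = (γ ++ x :: u :: δ).filter (x < ·) := by
              simp [hxu]
            rw [hL, hR]
            exact Relation.ReflTransGen.refl
          · -- u < v < x : left children step, right equal
            have h3 : u < x := lt_trans huv h2
            have hR : (γ ++ u :: v :: δ).filter (x < ·) = (γ ++ v :: u :: δ).filter (x < ·) := by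
              simp [Nat.not_lt.mpr h2.le, Nat.not_lt.mpr h3.le]
            have hL : BruhatStep ((γ ++ u :: v :: δ).filter (· < x))
                ((γ ++ v :: u :: δ).filter (· < x)) := by
              have r1 : (γ ++ u :: v :: δ).filter (· < x)
                  = γ.filter (· < x) ++ u :: v :: δ.filter (· < x) := by simp [h2, h3]
              have r2 : (γ ++ v :: u :: δ).filter (· < x)
                  = γ.filter (· < x) ++ v :: u :: δ.filter (· < x) := by simp [h2, h3]
              rw [r1, r2]
              exact BruhatStep.swap _ _ huv
            rw [hR]
            exact TamariLE_node_left _ (ih _ _ (hlen' _) hL)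

end TonksAux

theorem tonksPhi_order_preserving (n : ℕ) (π ρ : List ℕ)
    (hperm : π.Perm (List.range' 1 n)) (h : BruhatLE π ρ) :
    TamariLE (tonksPhi π) (tonksPhi ρ) := by
  induction h with
  | refl => exact Relation.ReflTransGen.refl
  | tail _ hbc ih => exact Relation.ReflTransGen.trans ih (tonksPhi_step _ _ _ le_rfl hbc)
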